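/- Let S be a finite set, P a row-stochastic matrix indexed by S, r : S → [0,1] a reward function, γ ∈ (0,1), and E ⊆ S. Define the value V(s) = Σ_{t=0}^∞ γ^t Σ_{s'} (P^t)_{s,s'} r(s'), and for t ≥ 0 define the first-exit-constrained visitation A_t(s) = Pr(s_0,…,s_{t−1} ∈ E and s_t = s | s_0, P), i.e. the sum over all paths from the start state that remain in E at times 0,…,t−1 and are at s at time t. Then for every start state s₀ ∈ E: V(s₀) = Σ_{t=0}^∞ γ^t Σ_{s ∈ E} A_t(s) r(s) + Σ_{t=1}^∞ γ^t Σ_{s ∉ E} A_t(s) V(s). -/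

import Mathlib

open scoped BigOperators

/-- `constrainedVisit P E s₀ t s` is the probability, for the Markov chain with transition
matrix `P` started at `s₀`, of staying in `E` at times `0,…,t-1` and being at `s` at time
`t`: for `t ≥ 1` it unfolds to the path sum
`Σ_{(s₁,…,s_{t−1}) ∈ E^{t−1}} P_{s₀,s₁} ⋯ P_{s_{t−1},s}` (with the additional constraint
`s₀ ∈ E` built in), and `constrainedVisit P E s₀ 0 s = 𝟙[s = s₀]`. -/
noncomputable def constrainedVisit {S : Type*} [Fintype S] [DecidableEq S]
    (P : Matrix S S ℝ) (E : Finset S) (s₀ : S) : ℕ → S → ℝ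
  | 0 => fun s => if s = s₀ then 1 else 0
  | (t + 1) => fun s => ∑ s' ∈ E, constrainedVisit P E s₀ t s' * P s' s

/-- The value function of a Markov reward process with transition matrix `P`,
reward `r` and discount factor `γ`. -/
noncomputable def mrpValue {S : Type*} [Fintype S] [DecidableEq S]
    (P : Matrix S S ℝ) (r : S → ℝ) (γ : ℝ) (s : S) : ℝ :=
  ∑' t : ℕ, γ ^ t * ∑ s', (P ^ t) s s' * r s'

section Aux

variable {S : Type*} [Fintype S] [DecidableEq S]

lemma powP_nonneg (P : Matrix S S ℝ) (hP0 : ∀ s s', 0 ≤ P s s') :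
    ∀ (t : ℕ) (s s' : S), 0 ≤ (P ^ t) s s' := by
  intro t
  induction t with
  | zero =>
    intro s s'
    simp only [pow_zero, Matrix.one_apply]
    split <;> norm_num
  | succ t ih =>
    intro s s'
    rw [pow_succ, Matrix.mul_apply]
    exact Finset.sum_nonneg fun s'' _ => mul_nonneg (ih s s'') (hP0 s'' s')

lemma powP_rowsum (P : Matrix S S ℝ) (hP1 : ∀ s, ∑ s', P s s' = 1) :
    ∀ (t : ℕ) (s : S), ∑ s', (P ^ t) s s' = 1 := by
  intro t
  induction t with
  | zero => intro s; simp [Matrix.one_apply]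
  | succ t ih =>
    intro s
    simp only [pow_succ, Matrix.mul_apply]
    rw [Finset.sum_comm]
    calc ∑ s'' : S, ∑ s' : S, (P ^ t) s s'' * P s'' s'
        = ∑ s'' : S, (P ^ t) s s'' * ∑ s' : S, P s'' s' := by
          simp [Finset.mul_sum]
      _ = 1 := by simp only [hP1, mul_one]; exact ih s

lemma mrp_summable (P : Matrix S S ℝ) (hP0 : ∀ s s', 0 ≤ P s s') (hP1 : ∀ s, ∑ s', P s s' = 1)
    (r : S → ℝ) (hr0 : ∀ s, 0 ≤ r s) (hr1 : ∀ s, r s ≤ 1)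
    (γ : ℝ) (hγ0 : 0 < γ) (hγ1 : γ < 1) (s : S) :
    Summable (fun t : ℕ => γ ^ t * ∑ s', (P ^ t) s s' * r s') := by
  apply Summable.of_nonneg_of_le
    (fun t => mul_nonneg (pow_nonneg hγ0.le t)
      (Finset.sum_nonneg fun s' _ => mul_nonneg (powP_nonneg P hP0 t s s') (hr0 s')))
    (fun t => ?_) (summable_geometric_of_lt_one hγ0.le hγ1)
  calc γ ^ t * ∑ s', (P ^ t) s s' * r s'
      ≤ γ ^ t * ∑ s', (P ^ t) s s' * 1 := by
        apply mul_le_mul_of_nonneg_left _ (pow_nonneg hγ0.le t)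
        exact Finset.sum_le_sum fun s' _ =>
          mul_le_mul_of_nonneg_left (hr1 s') (powP_nonneg P hP0 t s s')
    _ = γ ^ t := by simp [powP_rowsum P hP1 t s]

lemma mrp_nonneg (P : Matrix S S ℝ) (hP0 : ∀ s s', 0 ≤ P s s')
    (r : S → ℝ) (hr0 : ∀ s, 0 ≤ r s)
    (γ : ℝ) (hγ0 : 0 < γ) (s : S) : 0 ≤ mrpValue P r γ s :=
  tsum_nonneg fun t => mul_nonneg (pow_nonneg hγ0.le t)
    (Finset.sum_nonneg fun s' _ => mul_nonneg (powP_nonneg P hP0 t s s') (hr0 s'))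

lemma mrp_le (P : Matrix S S ℝ) (hP0 : ∀ s s', 0 ≤ P s s') (hP1 : ∀ s, ∑ s', P s s' = 1)
    (r : S → ℝ) (hr0 : ∀ s, 0 ≤ r s) (hr1 : ∀ s, r s ≤ 1)
    (γ : ℝ) (hγ0 : 0 < γ) (hγ1 : γ < 1) (s : S) :
    mrpValue P r γ s ≤ (1 - γ)⁻¹ := by
  have hsum := mrp_summable P hP0 hP1 r hr0 hr1 γ hγ0 hγ1 s
  have hle : ∀ t : ℕ, γ ^ t * ∑ s', (P ^ t) s s' * r s' ≤ γ ^ t := by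
    intro t
    calc γ ^ t * ∑ s', (P ^ t) s s' * r s'
        ≤ γ ^ t * ∑ s', (P ^ t) s s' * 1 := by
          apply mul_le_mul_of_nonneg_left _ (pow_nonneg hγ0.le t)
          exact Finset.sum_le_sum fun s' _ =>
            mul_le_mul_of_nonneg_left (hr1 s') (powP_nonneg P hP0 t s s')
      _ = γ ^ t := by simp [powP_rowsum P hP1 t s]
  calc mrpValue P r γ s ≤ ∑' t : ℕ, γ ^ t :=
        Summable.tsum_le_tsum hle hsum (summable_geometric_of_lt_one hγ0.le hγ1)
    _ = (1 - γ)⁻¹ := tsum_geometric_of_lt_one hγ0.le hγ1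

lemma bellman (P : Matrix S S ℝ) (hP0 : ∀ s s', 0 ≤ P s s') (hP1 : ∀ s, ∑ s', P s s' = 1)
    (r : S → ℝ) (hr0 : ∀ s, 0 ≤ r s) (hr1 : ∀ s, r s ≤ 1)
    (γ : ℝ) (hγ0 : 0 < γ) (hγ1 : γ < 1) (s : S) :
    mrpValue P r γ s = r s + γ * ∑ s', P s s' * mrpValue P r γ s' := by
  have hsum := mrp_summable P hP0 hP1 r hr0 hr1 γ hγ0 hγ1 s
  unfold mrpValue
  rw [Summable.tsum_eq_zero_add hsum]
  congr 1
  · simp [Matrix.one_apply]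
  · have hptw : ∀ t : ℕ, γ ^ (t + 1) * ∑ s', (P ^ (t + 1)) s s' * r s'
        = ∑ s'' : S, P s s'' * (γ * (γ ^ t * ∑ s', (P ^ t) s'' s' * r s')) := by
      intro t
      simp only [pow_succ' P t, Matrix.mul_apply, Finset.sum_mul]
      rw [Finset.sum_comm]
      simp only [Finset.mul_sum]
      apply Finset.sum_congr rfl
      intro s'' _
      apply Finset.sum_congr rfl
      intro s' _
      ring
    rw [tsum_congr hptw, Finset.mul_sum]
    rw [Summable.tsum_finsetSum (fun s'' _ => ((mrp_summable P hP0 hP1 r hr0 hr1 γ hγ0 hγ1 s'').mul_left γ).mul_left (P s s''))]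
    apply Finset.sum_congr rfl
    intro s'' _
    rw [tsum_mul_left, tsum_mul_left]
    ring

lemma cv_nonneg (P : Matrix S S ℝ) (hP0 : ∀ s s', 0 ≤ P s s') (E : Finset S) (s₀ : S) :
    ∀ (t : ℕ) (s : S), 0 ≤ constrainedVisit P E s₀ t s := by
  intro t
  induction t with
  | zero => intro s; simp only [constrainedVisit]; split <;> norm_num
  | succ t ih =>
    intro s
    simp only [constrainedVisit]
    exact Finset.sum_nonneg fun s' _ => mul_nonneg (ih s') (hP0 s' s)

lemma cv_sum_le_one (P : Matrix S S ℝ) (hP0 : ∀ s s', 0 ≤ P s s') (hP1 : ∀ s, ∑ s', P s s' = 1)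
    (E : Finset S) (s₀ : S) :
    ∀ t : ℕ, ∑ s : S, constrainedVisit P E s₀ t s ≤ 1 := by
  intro t
  induction t with
  | zero => simp [constrainedVisit]
  | succ t ih =>
    simp only [constrainedVisit]
    rw [Finset.sum_comm]
    calc ∑ s' ∈ E, ∑ s : S, constrainedVisit P E s₀ t s' * P s' s
        = ∑ s' ∈ E, constrainedVisit P E s₀ t s' := by
          simp [← Finset.mul_sum, hP1]
      _ ≤ ∑ s' : S, constrainedVisit P E s₀ t s' :=
          Finset.sum_le_sum_of_subset_of_nonneg (Finset.subset_univ E)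
            (fun s' _ _ => cv_nonneg P hP0 E s₀ t s')
      _ ≤ 1 := ih

end Aux

/-- First-exit decomposition of the value function: for every start state
`s₀ ∈ E`,
`V(s₀) = Σ_{t=0}^∞ γ^t Σ_{s∈E} A_t(s) r(s) + Σ_{t=1}^∞ γ^t Σ_{s∉E} A_t(s) V(s)`,
where `A_t` is the first-exit-constrained visitation `constrainedVisit P E s₀ t`. -/
theorem stmt_14 {S : Type*} [Fintype S] [DecidableEq S]
    (P : Matrix S S ℝ) (hP0 : ∀ s s', 0 ≤ P s s') (hP1 : ∀ s, ∑ s', P s s' = 1)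
    (r : S → ℝ) (hr0 : ∀ s, 0 ≤ r s) (hr1 : ∀ s, r s ≤ 1)
    (γ : ℝ) (hγ0 : 0 < γ) (hγ1 : γ < 1)
    (E : Finset S) (s₀ : S) (hs₀ : s₀ ∈ E) :
    mrpValue P r γ s₀ =
      (∑' t : ℕ, γ ^ t * ∑ s ∈ E, constrainedVisit P E s₀ t s * r s)
        + ∑' t : ℕ, γ ^ (t + 1) *
            ∑ s ∈ Finset.univ \ E, constrainedVisit P E s₀ (t + 1) s * mrpValue P r γ s := by
  set V : S → ℝ := mrpValue P r γ with hV
  set A : ℕ → S → ℝ := constrainedVisit P E s₀ with hA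
  have hVnn : ∀ s, 0 ≤ V s := fun s => mrp_nonneg P hP0 r hr0 γ hγ0 s
  have hVle : ∀ s, V s ≤ (1 - γ)⁻¹ := fun s => mrp_le P hP0 hP1 r hr0 hr1 γ hγ0 hγ1 s
  have hAnn : ∀ t s, 0 ≤ A t s := fun t s => cv_nonneg P hP0 E s₀ t s
  have hAsum : ∀ t, ∑ s : S, A t s ≤ 1 := fun t => cv_sum_le_one P hP0 hP1 E s₀ t
  set a : ℕ → ℝ := fun t => γ ^ t * ∑ s ∈ E, A t s * r s with ha
  set b : ℕ → ℝ := fun t => γ ^ (t + 1) * ∑ s ∈ Finset.univ \ E, A (t + 1) s * V s with hb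
  set C : ℝ := (1 - γ)⁻¹ with hC
  have hCnn : 0 ≤ C := by
    rw [hC]
    exact inv_nonneg.mpr (by linarith)
  -- bounds for partial sums of A weighted by bounded functions
  have hgen : ∀ (t : ℕ) (F : Finset S) (f : S → ℝ), (∀ s, 0 ≤ f s) → (∀ s, f s ≤ C) →
      0 ≤ ∑ s ∈ F, A t s * f s ∧ ∑ s ∈ F, A t s * f s ≤ C := by
    intro t F f hf0 hfC
    constructor
    · exact Finset.sum_nonneg fun s _ => mul_nonneg (hAnn t s) (hf0 s)
    · calc ∑ s ∈ F, A t s * f s ≤ ∑ s ∈ F, A t s * C :=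
            Finset.sum_le_sum fun s _ => mul_le_mul_of_nonneg_left (hfC s) (hAnn t s)
        _ = (∑ s ∈ F, A t s) * C := by rw [Finset.sum_mul]
        _ ≤ 1 * C := by
            apply mul_le_mul_of_nonneg_right _ hCnn
            calc ∑ s ∈ F, A t s ≤ ∑ s : S, A t s :=
                  Finset.sum_le_sum_of_subset_of_nonneg (Finset.subset_univ F)
                    (fun s _ _ => hAnn t s)
              _ ≤ 1 := hAsum t
        _ = C := one_mul C
  have hrC : ∀ s, r s ≤ C := by
    intro s
    calc r s ≤ 1 := hr1 s
      _ ≤ C := by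
          rw [hC, le_inv_comm₀] <;> nlinarith
  -- summability of a and b
  have hsa : Summable a := by
    apply Summable.of_nonneg_of_le
      (fun t => mul_nonneg (pow_nonneg hγ0.le t) (hgen t E r hr0 hrC).1)
      (fun t => ?_) ((summable_geometric_of_lt_one hγ0.le hγ1).mul_right C)
    exact mul_le_mul_of_nonneg_left (hgen t E r hr0 hrC).2 (pow_nonneg hγ0.le t)
  have hsb : Summable b := by
    apply Summable.of_nonneg_of_le
      (fun t => mul_nonneg (pow_nonneg hγ0.le (t + 1))
        (hgen (t + 1) (Finset.univ \ E) V hVnn hVle).1)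
      (fun t => ?_)
      (((summable_geometric_of_lt_one hγ0.le hγ1).mul_right C).mul_left γ)
    calc b t ≤ γ ^ (t + 1) * C :=
          mul_le_mul_of_nonneg_left (hgen (t + 1) (Finset.univ \ E) V hVnn hVle).2
            (pow_nonneg hγ0.le (t + 1))
      _ = γ * (γ ^ t * C) := by ring
  -- the key finite-horizon identity
  have key : ∀ T : ℕ, V s₀ = ∑ t ∈ Finset.range T, a t + ∑ t ∈ Finset.range T, b t
      + γ ^ T * ∑ s ∈ E, A T s * V s := by
    intro T
    induction T with
    | zero =>
      simp only [Finset.range_zero, Finset.sum_empty, pow_zero, one_mul, zero_add]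
      rw [hA]
      simp only [constrainedVisit]
      rw [Finset.sum_eq_single s₀]
      · simp
      · intro s hs hne; simp [hne]
      · intro h; exact absurd hs₀ h
    | succ T ih =>
      rw [ih]
      have step : γ ^ T * ∑ s ∈ E, A T s * V s
          = a T + b T + γ ^ (T + 1) * ∑ s ∈ E, A (T + 1) s * V s := by
        have hbell : ∀ s, V s = r s + γ * ∑ s', P s s' * V s' :=
          fun s => bellman P hP0 hP1 r hr0 hr1 γ hγ0 hγ1 s
        calc γ ^ T * ∑ s ∈ E, A T s * V s
            = γ ^ T * ∑ s ∈ E, A T s * (r s + γ * ∑ s', P s s' * V s') := by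
              congr 1
              exact Finset.sum_congr rfl fun s _ => by rw [← hbell s]
          _ = a T + γ ^ (T + 1) * ∑ s ∈ E, ∑ s', A T s * P s s' * V s' := by
              rw [ha]
              simp only [mul_add, Finset.sum_add_distrib, Finset.mul_sum]
              ring_nf
          _ = a T + γ ^ (T + 1) * ∑ s' : S, A (T + 1) s' * V s' := by
              congr 2
              rw [Finset.sum_comm]
              apply Finset.sum_congr rfl
              intro s' _
              rw [hA]
              simp only [constrainedVisit]
              rw [Finset.sum_mul]
          _ = a T + b T + γ ^ (T + 1) * ∑ s ∈ E, A (T + 1) s * V s := by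
              rw [← Finset.sum_sdiff (Finset.subset_univ E)]
              rw [hb]
              ring
      rw [step, Finset.sum_range_succ, Finset.sum_range_succ]
      ring
  -- remainder tends to zero
  have hrem : Filter.Tendsto (fun T : ℕ => γ ^ T * ∑ s ∈ E, A T s * V s)
      Filter.atTop (nhds 0) := by
    apply squeeze_zero
      (fun T => mul_nonneg (pow_nonneg hγ0.le T) (hgen T E V hVnn hVle).1)
      (fun T => mul_le_mul_of_nonneg_left (hgen T E V hVnn hVle).2 (pow_nonneg hγ0.le T))
    have := (tendsto_pow_atTop_nhds_zero_of_lt_one hγ0.le hγ1).mul_const C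
    simpa using this
  have hlim : Filter.Tendsto
      (fun T : ℕ => ∑ t ∈ Finset.range T, a t + ∑ t ∈ Finset.range T, b t
        + γ ^ T * ∑ s ∈ E, A T s * V s)
      Filter.atTop (nhds (∑' t, a t + ∑' t, b t + 0)) :=
    ((hsa.hasSum.tendsto_sum_nat.add hsb.hasSum.tendsto_sum_nat).add hrem)
  have hconst : Filter.Tendsto
      (fun T : ℕ => ∑ t ∈ Finset.range T, a t + ∑ t ∈ Finset.range T, b t
        + γ ^ T * ∑ s ∈ E, A T s * V s)
      Filter.atTop (nhds (V s₀)) := by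
    have : (fun T : ℕ => ∑ t ∈ Finset.range T, a t + ∑ t ∈ Finset.range T, b t
        + γ ^ T * ∑ s ∈ E, A T s * V s) = fun _ => V s₀ := by
      funext T
      exact (key T).symm
    rw [this]
    exact tendsto_const_nhds
  have := tendsto_nhds_unique hconst hlim
  rw [this, add_zero]
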